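/- (Corollary 4, rank form.) Suppose Γ is self-dual, and define f(X) = rk(M_X) + rk(M_{P∖X}) for X ⊆ P, with rk the rank over F_q. Then: (1) for every unauthorized set A ∉ Γ there exists a maximal unauthorized set B (i.e. B ∉ Γ and B ∪ {p} ∈ Γ for every p ∈ P∖B) with A ⊆ B and f(A) ≤ f(B); and (2) every authorized set B ∈ Γ contains a minimal authorized set A ∈ Γ_min with f(B) ≤ f(A). Thus among unauthorized sets the maximal unauthorized sets have maximal f (hence maximal entropy), and among authorized sets the minimal authorized sets have maximal f (hence maximal entropy). -/

import Mathlib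

/-!
Normal-form monotone span programs (Smith's construction for quantum secret sharing).

Players are `Fin n`.  The minimal authorized sets are `A 0, …, A (k-1)`,
distinct nonempty subsets forming an antichain whose union is all of `Fin n`.
`enum i` fixes an enumeration of the elements of `A i`; the last element
`enum i ⟨card - 1⟩` plays the role of the distinguished participant of block `i`.
-/

/-- The combinatorial data of a normal-form monotone span program. -/
structure MSP (n k : ℕ) where
  /-- the minimal authorized sets -/
  A : Fin k → Finset (Fin n)
  nonempty : ∀ i, (A i).Nonempty
  /-- antichain (this also forces the `A i` to be pairwise distinct) -/
  antichain : ∀ i j : Fin k, i ≠ j → ¬ A i ⊆ A j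
  /-- every player occurs in some minimal authorized set -/
  cover : ∀ p : Fin n, ∃ i, p ∈ A i
  /-- a fixed enumeration `p_{i,1}, …, p_{i,|A_i|}` of each `A i` -/
  enum : ∀ i, Fin ((A i).card) ≃ {p : Fin n // p ∈ A i}

namespace MSP

variable {n k : ℕ}

/-- Row indices of the span matrix: block `i` has `|A i|` rows. -/
abbrev Rows (S : MSP n k) := (i : Fin k) × Fin ((S.A i).card)

/-- Column indices: the first column (`none`) together with the blocks
`C i` of `r_i = |A i| - 1` columns (`some ⟨i, j⟩`). -/
abbrev Cols (S : MSP n k) := Option ((i : Fin k) × Fin ((S.A i).card - 1))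

/-- The player labelling the rows (the map `ψ`). -/
def label (S : MSP n k) (r : S.Rows) : Fin n := (S.enum r.1 r.2 : Fin n)

/-- The normal-form span matrix `M`.  In block `i`, row `j` with
`j < |A i| - 1` is the `j`-th identity row (a single `1` in column
`some ⟨i, j⟩`), and the last row (`j = |A i| - 1`) is
`(1, 0, …, 0, -1, …, -1)`: a `1` in column `none` and `-1` in every
column of block `i`. -/
def M (F : Type*) [Field F] (S : MSP n k) : Matrix S.Rows S.Cols F :=
  Matrix.of fun r c =>
    match c with
    | none => if (r.2 : ℕ) = (S.A r.1).card - 1 then 1 else 0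
    | some ⟨i, j⟩ =>
        if i = r.1 then
          (if (r.2 : ℕ) = (S.A r.1).card - 1 then -1
           else if (j : ℕ) = (r.2 : ℕ) then 1 else 0)
        else 0

/-- The submatrix `M_B` of `M` consisting of all rows labelled by players in `B`. -/
def MSub (F : Type*) [Field F] (S : MSP n k) (B : Finset (Fin n)) :
    Matrix {r : S.Rows // S.label r ∈ B} S.Cols F :=
  Matrix.of fun r c => M F S r.1 c

/-- The vector `ε₁ = (1, 0, …, 0)`. -/
def eps1 (F : Type*) [Field F] (S : MSP n k) : S.Cols → F :=
  fun c => match c with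
  | none => 1
  | some _ => 0

/-- The access structure computed by the program:
`B` is authorized iff it contains some minimal authorized set. -/
def auth (S : MSP n k) (B : Finset (Fin n)) : Prop := ∃ i, S.A i ⊆ B

/-- Self-duality of the access structure. -/
def selfDual (S : MSP n k) : Prop :=
  ∀ X : Finset (Fin n), S.auth X ↔ ¬ S.auth (Finset.univ \ X)

end MSP

open MSP

/-- `f(X) = rk(M_X) + rk(M_{P∖X})`, the rank functional governing the entropy
of the normal-form secret sharing state. -/
noncomputable def MSP.rkPair (F : Type*) [Field F] {n k : ℕ} (S : MSP n k) (X : Finset (Fin n)) : ℕ :=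
  (MSub F S X).rank + (MSub F S (Finset.univ \ X)).rank

section Aux

variable {F : Type*} [Field F] {n k : ℕ}

open Finset Submodule Module

/-- number of rows labelled by players in `X` -/
noncomputable def rowCard (S : MSP n k) (X : Finset (Fin n)) : ℕ :=
  Fintype.card {r : S.Rows // S.label r ∈ X}

lemma rowCard_split (S : MSP n k) {X Y : Finset (Fin n)} (hXY : X ⊆ Y) :
    rowCard S X + rowCard S (Y \ X) = rowCard S Y := by
  classical
  unfold rowCard
  rw [Fintype.card_subtype, Fintype.card_subtype, Fintype.card_subtype,
    ← Finset.card_union_of_disjoint]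
  · congr 1
    ext r
    simp only [Finset.mem_union, Finset.mem_filter, Finset.mem_univ, true_and,
      Finset.mem_sdiff]
    constructor
    · rintro (h | h)
      · exact hXY h
      · exact h.1
    · intro h
      by_cases hX : S.label r ∈ X
      · exact Or.inl hX
      · exact Or.inr ⟨h, hX⟩
  · rw [Finset.disjoint_left]
    intro r hr hr'
    simp only [Finset.mem_filter, Finset.mem_univ, true_and, Finset.mem_sdiff] at hr hr'
    exact hr'.2 hr

lemma rowCard_univ (S : MSP n k) :
    rowCard S (Finset.univ : Finset (Fin n)) = Fintype.card S.Rows :=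
  Fintype.card_congr (Equiv.subtypeUnivEquiv fun _ => Finset.mem_univ _)

lemma rowCard_compl (S : MSP n k) (X : Finset (Fin n)) :
    rowCard S X + rowCard S (Finset.univ \ X) = Fintype.card S.Rows := by
  rw [rowCard_split S (Finset.subset_univ X), rowCard_univ]

/-- rows of an unauthorized submatrix are linearly independent -/
lemma rows_linearIndependent (S : MSP n k) (X : Finset (Fin n)) (hX : ¬ S.auth X) :
    LinearIndependent F (MSub F S X) := by
  classical
  apply Fintype.linearIndependent_iff.mpr
  intro g hg
  -- extend `g` by zero to all rows
  set g' : S.Rows → F := fun r => if h : S.label r ∈ X then g ⟨r, h⟩ else 0 with hg'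
  have key : ∀ c : S.Cols, ∑ r : S.Rows, g' r * M F S r c = 0 := by
    intro c
    have h1 : ∑ r : S.Rows, g' r * M F S r c
        = ∑ r : {r : S.Rows // S.label r ∈ X}, g r * M F S r.1 c := by
      rw [← Finset.sum_filter_of_ne (p := fun r => S.label r ∈ X)
        (f := fun r => g' r * M F S r c)
        (by intro r _ hne; by_contra h; simp [hg', h] at hne)]
      rw [Finset.sum_subtype (p := fun r => S.label r ∈ X)
        (Finset.univ.filter fun r => S.label r ∈ X)
        (by intro r; simp) (fun r => g' r * M F S r c)]
      refine Finset.sum_congr rfl fun r _ => ?_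
      simp [hg', r.2]
    have h2 := congrFun hg c
    simp only [Finset.sum_apply, Pi.smul_apply, smul_eq_mul, Pi.zero_apply] at h2
    rw [h1]
    exact h2
  -- show all extended coefficients vanish
  have main : ∀ r : S.Rows, g' r = 0 := by
    rintro ⟨i, j⟩
    have hmpos : 0 < (S.A i).card := Finset.card_pos.2 (S.nonempty i)
    have hlstlt : (S.A i).card - 1 < (S.A i).card := Nat.sub_lt hmpos one_pos
    -- the column equations within block i
    have stepB : ∀ j' : Fin ((S.A i).card - 1),
        g' ⟨i, Fin.castLE (Nat.sub_le _ 1) j'⟩ = g' ⟨i, ⟨(S.A i).card - 1, hlstlt⟩⟩ := by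
      intro j'
      have hc := key (some ⟨i, j'⟩)
      rw [← Finset.univ_sigma_univ, Finset.sum_sigma] at hc
      rw [Finset.sum_eq_single_of_mem i (Finset.mem_univ i)
        (fun i' _ hne => by
          apply Finset.sum_eq_zero
          intro j'' _
          have hz : M F S ⟨i', j''⟩ (some ⟨i, j'⟩) = 0 := by
            simp only [M, Matrix.of_apply]
            exact if_neg fun h => hne h.symm
          rw [hz, mul_zero])] at hc
      have hsum : ∑ j'' : Fin ((S.A i).card), g' ⟨i, j''⟩ * M F S ⟨i, j''⟩ (some ⟨i, j'⟩)
          = (∑ j'' : Fin ((S.A i).card),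
              if j'' = Fin.castLE (Nat.sub_le _ 1) j' then g' ⟨i, j''⟩ else 0)
            - (∑ j'' : Fin ((S.A i).card),
              if j'' = ⟨(S.A i).card - 1, hlstlt⟩ then g' ⟨i, j''⟩ else 0) := by
        rw [← Finset.sum_sub_distrib]
        refine Finset.sum_congr rfl fun j'' _ => ?_
        have hj'lt : (j' : ℕ) < (S.A i).card - 1 := j'.isLt
        by_cases h1 : (j'' : ℕ) = (S.A i).card - 1
        · have e1 : j'' = ⟨(S.A i).card - 1, hlstlt⟩ := Fin.ext h1
          have e2 : j'' ≠ Fin.castLE (Nat.sub_le _ 1) j' := by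
            intro h
            have := congrArg Fin.val h
            simp only [Fin.coe_castLE] at this
            omega
          rw [show M F S ⟨i, j''⟩ (some ⟨i, j'⟩) = (-1 : F) by simp [M, h1],
            if_neg e2, if_pos e1]
          ring
        · by_cases h2 : (j' : ℕ) = (j'' : ℕ)
          · have e1 : j'' = Fin.castLE (Nat.sub_le _ 1) j' := Fin.ext h2.symm
            have e2 : j'' ≠ ⟨(S.A i).card - 1, hlstlt⟩ := fun h => h1 (congrArg Fin.val h)
            rw [show M F S ⟨i, j''⟩ (some ⟨i, j'⟩) = (1 : F) by simp [M, h1, h2],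
              if_pos e1, if_neg e2]
            ring
          · have e1 : j'' ≠ Fin.castLE (Nat.sub_le _ 1) j' := by
              intro h
              have := congrArg Fin.val h
              simp only [Fin.coe_castLE] at this
              exact h2 this.symm
            have e2 : j'' ≠ ⟨(S.A i).card - 1, hlstlt⟩ := fun h => h1 (congrArg Fin.val h)
            rw [show M F S ⟨i, j''⟩ (some ⟨i, j'⟩) = (0 : F) by simp [M, h1, h2],
              if_neg e1, if_neg e2]
            ring
      rw [hsum, Finset.sum_ite_eq' Finset.univ _ (fun j'' => g' ⟨i, j''⟩),
        Finset.sum_ite_eq' Finset.univ _ (fun j'' => g' ⟨i, j''⟩)] at hc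
      simp only [Finset.mem_univ, if_pos] at hc
      exact sub_eq_zero.mp hc
    have stepC : ∀ j'' : Fin ((S.A i).card),
        g' ⟨i, j''⟩ = g' ⟨i, ⟨(S.A i).card - 1, hlstlt⟩⟩ := by
      intro j''
      by_cases h1 : (j'' : ℕ) = (S.A i).card - 1
      · rw [Fin.ext h1 (b := ⟨(S.A i).card - 1, hlstlt⟩)]
      · have hlt : (j'' : ℕ) < (S.A i).card - 1 := by omega
        have e : Fin.castLE (Nat.sub_le _ 1) (⟨(j'' : ℕ), hlt⟩ : Fin ((S.A i).card - 1))
            = j'' := Fin.ext rfl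
        rw [← e]
        exact stepB _
    -- block i has a missing row
    have hni : ¬ S.A i ⊆ X := fun hsub => hX ⟨i, hsub⟩
    obtain ⟨p, hpA, hpX⟩ := Finset.not_subset.mp hni
    have hlabel : S.label ⟨i, (S.enum i).symm ⟨p, hpA⟩⟩ = p := by
      simp [MSP.label]
    have hz : g' ⟨i, (S.enum i).symm ⟨p, hpA⟩⟩ = 0 := by
      rw [hg']
      simp only
      rw [dif_neg (show ¬ S.label ⟨i, (S.enum i).symm ⟨p, hpA⟩⟩ ∈ X by rw [hlabel]; exact hpX)]
    have hlz : g' ⟨i, ⟨(S.A i).card - 1, hlstlt⟩⟩ = 0 := by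
      rw [← stepC ((S.enum i).symm ⟨p, hpA⟩)]
      exact hz
    rw [stepC j, hlz]
  intro r
  have := main r.1
  simpa [hg', r.2] using this

lemma rank_eq_card_of_unauth (S : MSP n k) (X : Finset (Fin n)) (hX : ¬ S.auth X) :
    (MSub F S X).rank = rowCard S X :=
  LinearIndependent.rank_matrix (rows_linearIndependent S X hX)

lemma rank_le_rank_add (S : MSP n k) {X Y : Finset (Fin n)} (hXY : X ⊆ Y) :
    (MSub F S Y).rank ≤ (MSub F S X).rank + rowCard S (Y \ X) := by
  classical
  rw [Matrix.rank_eq_finrank_span_row, Matrix.rank_eq_finrank_span_row]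
  have hsub : Set.range (MSub F S Y)
      ⊆ (Set.range (MSub F S X) ∪ Set.range (MSub F S (Y \ X)) : Set (S.Cols → F)) := by
    rintro v ⟨r, rfl⟩
    by_cases h : S.label r.1 ∈ X
    · exact Or.inl ⟨⟨r.1, h⟩, rfl⟩
    · exact Or.inr ⟨⟨r.1, Finset.mem_sdiff.2 ⟨r.2, h⟩⟩, rfl⟩
  have hle : span F (Set.range (MSub F S Y))
      ≤ span F (Set.range (MSub F S X)) ⊔ span F (Set.range (MSub F S (Y \ X))) := by
    rw [← Submodule.span_union]
    exact Submodule.span_mono hsub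
  calc finrank F (span F (Set.range (MSub F S Y)))
      ≤ finrank F (span F (Set.range (MSub F S X)) ⊔ span F (Set.range (MSub F S (Y \ X))) :
          Submodule F (S.Cols → F)) := Submodule.finrank_mono hle
    _ ≤ finrank F (span F (Set.range (MSub F S X)))
          + finrank F (span F (Set.range (MSub F S (Y \ X)))) :=
        Submodule.finrank_add_le_finrank_add_finrank _ _
    _ ≤ finrank F (span F (Set.range (MSub F S X))) + rowCard S (Y \ X) := by
        have h := (MSub F S (Y \ X)).rank_le_card_height
        rw [Matrix.rank_eq_finrank_span_row] at h
        exact Nat.add_le_add_left h _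

lemma exists_maximal_unauth (S : MSP n k) (A : Finset (Fin n)) (hA : ¬ S.auth A) :
    ∃ B, A ⊆ B ∧ ¬ S.auth B ∧ ∀ p ∉ B, S.auth (insert p B) := by
  classical
  set s : Finset (Finset (Fin n)) := Finset.univ.filter (fun B => A ⊆ B ∧ ¬ S.auth B) with hs
  have hne : s.Nonempty := ⟨A, by simp [hs, hA]⟩
  obtain ⟨B, hBs, hmax⟩ := Finset.exists_max_image s Finset.card hne
  simp only [hs, Finset.mem_filter, Finset.mem_univ, true_and] at hBs
  refine ⟨B, hBs.1, hBs.2, fun p hp => ?_⟩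
  by_contra hauth
  have hmem : insert p B ∈ s := by
    simp only [hs, Finset.mem_filter, Finset.mem_univ, true_and]
    exact ⟨hBs.1.trans (Finset.subset_insert p B), hauth⟩
  have := hmax _ hmem
  rw [Finset.card_insert_of_notMem hp] at this
  omega

end Aux

/-- Corollary 4, rank form.  Suppose `Γ` is self-dual and let
`f(X) = rk(M_X) + rk(M_{P∖X})`.  Then (1) every unauthorized set `A` is
contained in a maximal unauthorized set `B` with `f(A) ≤ f(B)`, and (2) every
authorized set `B` contains a minimal authorized set `A i` with `f(B) ≤ f(A i)`:
among unauthorized sets the maximal ones have maximal `f` (hence maximal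
entropy), and among authorized sets the minimal ones have maximal `f` (hence
maximal entropy). -/
theorem extremal_sets_maximal_entropy {F : Type*} [Field F] [Fintype F] {n k : ℕ}
    (S : MSP n k) (hsd : S.selfDual) :
    (∀ A : Finset (Fin n), ¬ S.auth A →
      ∃ B : Finset (Fin n), ¬ S.auth B ∧ (∀ p : Fin n, p ∉ B → S.auth (insert p B)) ∧
        A ⊆ B ∧ S.rkPair F A ≤ S.rkPair F B) ∧
    (∀ B : Finset (Fin n), S.auth B →
      ∃ i : Fin k, S.A i ⊆ B ∧ S.rkPair F B ≤ S.rkPair F (S.A i)) := by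
  constructor
  · intro A hA
    obtain ⟨B, hAB, hB, hmax⟩ := exists_maximal_unauth S A hA
    refine ⟨B, hB, hmax, hAB, ?_⟩
    have h1 : (MSub F S A).rank = rowCard S A := rank_eq_card_of_unauth S A hA
    have h2 : (MSub F S B).rank = rowCard S B := rank_eq_card_of_unauth S B hB
    have hcomp : Finset.univ \ B ⊆ Finset.univ \ A :=
      Finset.sdiff_subset_sdiff (Finset.Subset.refl _) hAB
    have h3 := rank_le_rank_add (F := F) S hcomp
    have h4 := rowCard_split S hcomp
    have h5 := rowCard_compl S A
    have h6 := rowCard_compl S B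
    unfold MSP.rkPair
    omega
  · intro B hB
    obtain ⟨i, hi⟩ := hB
    refine ⟨i, hi, ?_⟩
    have hBc : ¬ S.auth (Finset.univ \ B) := (hsd B).mp ⟨i, hi⟩
    have hAc : ¬ S.auth (Finset.univ \ S.A i) := (hsd (S.A i)).mp ⟨i, Finset.Subset.refl _⟩
    have h1 : (MSub F S (Finset.univ \ B)).rank = rowCard S (Finset.univ \ B) :=
      rank_eq_card_of_unauth S _ hBc
    have h2 : (MSub F S (Finset.univ \ S.A i)).rank = rowCard S (Finset.univ \ S.A i) :=
      rank_eq_card_of_unauth S _ hAc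
    have h3 := rank_le_rank_add (F := F) S hi
    have h4 := rowCard_split S hi
    have h5 := rowCard_compl S B
    have h6 := rowCard_compl S (S.A i)
    unfold MSP.rkPair
    omega
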